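/- Let X ⊆ Y be Banach spaces with Y/X finite-dimensional, and suppose: (i) for every ε > 0 there is a projection of the bidual Y** onto X** (identified with the weak-star closure X^{⊥⊥} of X in Y**) whose complementary projection has norm ≤ β, and (ii) Y is 1-locally reflexive in the sense that for all finite-dimensional subspaces F ⊆ Y* and G ⊆ Y** and ε > 0 there is T : G → Y with ⟨Tg, f⟩ = ⟨g, f⟩ for all g ∈ G, f ∈ F and ‖T‖ < 1 + ε. Then for every ε > 0 there is a bounded projection R of Y onto a complement of X (i.e., ker R = X) with ‖R‖ ≤ β + ε, so X is (β+ε)-cocomplemented in Y. -/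

import Mathlib

open Filter Topology

namespace NormedSpace

noncomputable section

/-- The topological dual of a normed space (as in the older Mathlib). -/
def Dual (𝕜 : Type*) [NontriviallyNormedField 𝕜] (E : Type*) [SeminormedAddCommGroup E]
    [NormedSpace 𝕜 E] := E →L[𝕜] 𝕜

instance (𝕜 : Type*) [NontriviallyNormedField 𝕜] (E : Type*) [SeminormedAddCommGroup E]
    [NormedSpace 𝕜 E] : SeminormedAddCommGroup (Dual 𝕜 E) :=
  ContinuousLinearMap.toSeminormedAddCommGroup

instance (𝕜 : Type*) [NontriviallyNormedField 𝕜] (E : Type*) [SeminormedAddCommGroup E]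
    [NormedSpace 𝕜 E] : NormedSpace 𝕜 (Dual 𝕜 E) :=
  ContinuousLinearMap.toNormedSpace

instance (𝕜 : Type*) [NontriviallyNormedField 𝕜] (E : Type*) [SeminormedAddCommGroup E]
    [NormedSpace 𝕜 E] : FunLike (Dual 𝕜 E) E 𝕜 :=
  ContinuousLinearMap.funLike

instance (𝕜 : Type*) [NontriviallyNormedField 𝕜] (E : Type*) [SeminormedAddCommGroup E]
    [NormedSpace 𝕜 E] : ContinuousLinearMapClass (Dual 𝕜 E) 𝕜 E 𝕜 :=
  ContinuousLinearMap.continuousSemilinearMapClass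

instance (𝕜 : Type*) [NontriviallyNormedField 𝕜] (E : Type*) [NormedAddCommGroup E]
    [NormedSpace 𝕜 E] : NormedAddCommGroup (Dual 𝕜 E) :=
  ContinuousLinearMap.toNormedAddCommGroup

instance (E : Type*) [NormedAddCommGroup E] [NormedSpace ℝ E] :
    @NormedSpace ℝ (Dual ℝ E) _ NormedAddCommGroup.toSeminormedAddCommGroup :=
  ContinuousLinearMap.toNormedSpace

end

end NormedSpace

/-- The annihilator of a subspace in the continuous dual. -/
noncomputable def annih {E : Type*} [NormedAddCommGroup E] [NormedSpace ℝ E] (s : Submodule ℝ E) :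
    Submodule ℝ (NormedSpace.Dual ℝ E) where
  carrier := {f | ∀ x ∈ s, f x = 0}
  add_mem' := by
    intro f g hf hg x hx
    show f x + g x = 0
    simp [hf x hx, hg x hx]
  zero_mem' := by
    intro x hx
    rfl
  smul_mem' := by
    intro c f hf x hx
    show c • f x = 0
    simp [hf x hx]

lemma mem_annih {E : Type*} [NormedAddCommGroup E] [NormedSpace ℝ E] {s : Submodule ℝ E}
    {f : NormedSpace.Dual ℝ E} : f ∈ annih s ↔ ∀ x ∈ s, f x = 0 := Iff.rfl

lemma annih_sep {Y : Type*} [NormedAddCommGroup Y] [NormedSpace ℝ Y]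
    (X : Subspace ℝ Y) (hX : IsClosed (X : Set Y)) (y : Y)
    (h : ∀ f ∈ annih X, f y = 0) : y ∈ X := by
  by_contra hy
  obtain ⟨f, u, hfy, hu⟩ := geometric_hahn_banach_point_closed (X.convex) hX hy
  have hfann : f ∈ annih X := by
    intro x hx
    by_contra hfx
    have hx' : ((u - 1) / f x) • x ∈ X := X.smul_mem _ hx
    have := hu _ hx'
    rw [map_smul, smul_eq_mul] at this
    have e : (u - 1) / f x * f x = u - 1 := div_mul_cancel₀ _ hfx
    rw [e] at this
    linarith
  have h0 : u < f 0 := hu 0 X.zero_mem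
  rw [map_zero] at h0
  have := h f hfann
  have h' : f y = 0 := this
  linarith

lemma annih_findim {Y : Type*} [NormedAddCommGroup Y] [NormedSpace ℝ Y]
    (X : Subspace ℝ Y) [FiniteDimensional ℝ (Y ⧸ X)] :
    FiniteDimensional ℝ (annih X) := by
  let φ : annih X →ₗ[ℝ] ((Y ⧸ X) →ₗ[ℝ] ℝ) :=
    { toFun := fun f =>
        X.liftQ (f : NormedSpace.Dual ℝ Y).toLinearMap (fun x hx => f.2 x hx)
      map_add' := by
        intro f g
        refine Submodule.linearMap_qext _ ?_
        rfl
      map_smul' := by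
        intro c f
        refine Submodule.linearMap_qext _ ?_
        rfl }
  have hinj : Function.Injective φ := by
    intro f g hfg
    apply Subtype.ext; apply ContinuousLinearMap.ext; intro y
    have := congrArg (fun ψ => ψ (Submodule.Quotient.mk y)) hfg
    exact this
  exact FiniteDimensional.of_injective φ hinj

set_option maxHeartbeats 1600000 in
theorem stmt17 {Y : Type*} [NormedAddCommGroup Y] [NormedSpace ℝ Y] [CompleteSpace Y]
    (X : Subspace ℝ Y) (hXclosed : IsClosed (X : Set Y)) [FiniteDimensional ℝ (Y ⧸ X)]
    (β : ℝ)
    -- (i) for every ε > 0 there is a projection of Y** onto X** ≅ X^⊥⊥ whose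
    -- complementary projection has norm ≤ β:
    (hproj : ∀ ε > (0 : ℝ),
      ∃ Q : NormedSpace.Dual ℝ (NormedSpace.Dual ℝ Y) →L[ℝ]
             NormedSpace.Dual ℝ (NormedSpace.Dual ℝ Y),
        Q.comp Q = Q ∧ (∀ F, Q F ∈ annih (annih X)) ∧ (∀ F ∈ annih (annih X), Q F = F) ∧
        ‖ContinuousLinearMap.id ℝ (NormedSpace.Dual ℝ (NormedSpace.Dual ℝ Y)) - Q‖ ≤ β)
    -- (ii) Y is 1-locally reflexive:
    (hlocref : ∀ (F : Submodule ℝ (NormedSpace.Dual ℝ Y))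
        (G : Submodule ℝ (NormedSpace.Dual ℝ (NormedSpace.Dual ℝ Y))),
        FiniteDimensional ℝ F → FiniteDimensional ℝ G → ∀ ε > (0 : ℝ),
        ∃ T : ↥G →L[ℝ] Y,
          (∀ g : ↥G, ∀ f ∈ F, (g : NormedSpace.Dual ℝ (NormedSpace.Dual ℝ Y)) f = f (T g)) ∧
          ‖T‖ < 1 + ε) :
    -- then X is (β+ε)-cocomplemented in Y:
    ∀ ε > (0 : ℝ), ∃ R : Y →L[ℝ] Y,
      R.comp R = R ∧ LinearMap.ker (R : Y →ₗ[ℝ] Y) = X ∧ ‖R‖ ≤ β + ε := by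
  intro ε hε
  obtain ⟨Q, hQQ, hQmem, hQfix, hQnorm⟩ := hproj 1 one_pos
  have hβ0 : (0 : ℝ) ≤ β := le_trans (norm_nonneg _) hQnorm
  set J : Y →L[ℝ] NormedSpace.Dual ℝ (NormedSpace.Dual ℝ Y) := NormedSpace.inclusionInDoubleDual ℝ Y with hJ
  set P : NormedSpace.Dual ℝ (NormedSpace.Dual ℝ Y) →L[ℝ]
      NormedSpace.Dual ℝ (NormedSpace.Dual ℝ Y) :=
    ContinuousLinearMap.id ℝ _ - Q with hP
  have hPapp : ∀ z, P z = z - Q z := fun z => rfl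
  have hQidem : ∀ z, Q (Q z) = Q z := by
    intro z
    exact congrArg (fun f => f z) hQQ
  have hQP : ∀ z, Q (P z) = 0 := by
    intro z
    rw [hPapp, map_sub, hQidem, sub_self]
  -- the range of P is finite dimensional
  set G : Submodule ℝ (NormedSpace.Dual ℝ (NormedSpace.Dual ℝ Y)) := LinearMap.range P.toLinearMap with hG
  have hQG : ∀ g ∈ G, Q g = 0 := by
    rintro g ⟨z, rfl⟩
    exact hQP z
  haveI : FiniteDimensional ℝ (annih X) := annih_findim X
  haveI : FiniteDimensional ℝ G := by
    let ρ : ↥G →ₗ[ℝ] (↥(annih X) →ₗ[ℝ] ℝ) :=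
      { toFun := fun Φ =>
          ((Φ : NormedSpace.Dual ℝ (NormedSpace.Dual ℝ Y)) :
            NormedSpace.Dual ℝ Y →ₗ[ℝ] ℝ).comp (annih X).subtype
        map_add' := by intro f g; ext x; rfl
        map_smul' := by intro c f; ext x; rfl }
    have hinj : Function.Injective ρ := by
      intro g₁ g₂ hg
      have hsub : ((g₁ : NormedSpace.Dual ℝ (NormedSpace.Dual ℝ Y)) - g₂) ∈ annih (annih X) := by
        intro f hf
        have := congrArg (fun ψ => ψ (⟨f, hf⟩ : ↥(annih X))) hg
        show (g₁ : NormedSpace.Dual ℝ (NormedSpace.Dual ℝ Y)) f - (g₂ : NormedSpace.Dual ℝ (NormedSpace.Dual ℝ Y)) f = 0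
        exact sub_eq_zero.mpr this
      have h1 : Q ((g₁ : NormedSpace.Dual ℝ (NormedSpace.Dual ℝ Y)) - g₂)
          = (g₁ : NormedSpace.Dual ℝ (NormedSpace.Dual ℝ Y)) - g₂ := hQfix _ hsub
      rw [map_sub, hQG _ g₁.2, hQG _ g₂.2, sub_self] at h1
      exact Subtype.ext (sub_eq_zero.mp h1.symm)
    exact FiniteDimensional.of_injective ρ hinj
  -- local reflexivity
  have hε' : 0 < ε / (β + 1) := div_pos hε (by linarith)
  obtain ⟨T, hT, hTnorm⟩ := hlocref (annih X) G inferInstance inferInstance _ hε'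
  -- the map A' : Y →L G
  set A : Y →L[ℝ] NormedSpace.Dual ℝ (NormedSpace.Dual ℝ Y) := P.comp J with hA
  have hAmem : ∀ y, A y ∈ G := fun y => LinearMap.mem_range_self _ _
  set A' : Y →L[ℝ] ↥G := A.codRestrict G hAmem with hA'
  have hA'coe : ∀ y, ((A' y : ↥G) : NormedSpace.Dual ℝ (NormedSpace.Dual ℝ Y)) = P (J y) :=
    fun y => rfl
  set R : Y →L[ℝ] Y := T.comp A' with hR
  -- key claim: A' ∘ T = id on G
  have key : ∀ g : ↥G, A' (T g) = g := by
    intro g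
    apply Subtype.ext
    rw [hA'coe]
    have hD : (J (T g) - (g : NormedSpace.Dual ℝ (NormedSpace.Dual ℝ Y))) ∈ annih (annih X) := by
      intro f hf
      have h1 : (g : NormedSpace.Dual ℝ (NormedSpace.Dual ℝ Y)) f = f (T g) := hT g f hf
      have h2 : J (T g) f = f (T g) := NormedSpace.dual_def ℝ Y (T g) f
      show J (T g) f - (g : NormedSpace.Dual ℝ (NormedSpace.Dual ℝ Y)) f = 0
      rw [h1, h2, sub_self]
    have hQD := hQfix _ hD
    rw [map_sub, hQG _ g.2, sub_zero] at hQD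
    rw [hPapp, hQD, sub_sub_cancel]
  refine ⟨R, ?_, ?_, ?_⟩
  · ext y
    have : A' (T (A' y)) = A' y := key (A' y)
    simp only [hR, ContinuousLinearMap.comp_apply, ContinuousLinearMap.coe_comp',
      Function.comp_apply, this]
  · apply le_antisymm
    · -- ker R ≤ X
      intro y hy
      have hy0 : T (A' y) = 0 := hy
      have h1 : ((A' y : ↥G) : NormedSpace.Dual ℝ (NormedSpace.Dual ℝ Y)) = 0 := by
        have := congrArg (fun g : ↥G => (g : NormedSpace.Dual ℝ (NormedSpace.Dual ℝ Y)))
          (key (A' y)).symm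
        rw [this, hA'coe, hy0, map_zero, map_zero]
      have h1' : P (J y) = 0 := (hA'coe y).symm.trans h1
      have h2 : J y = Q (J y) :=
        sub_eq_zero.mp ((hPapp (J y)).symm.trans h1')
      have h3 : J y ∈ annih (annih X) := h2 ▸ hQmem (J y)
      apply annih_sep X hXclosed
      intro f hf
      have := h3 f hf
      exact this
    · -- X ≤ ker R
      intro x hx
      have h1 : J x ∈ annih (annih X) := by
        intro f hf
        show f x = 0
        exact hf x hx
      have h2 : P (J x) = 0 := by rw [hPapp, hQfix _ h1, sub_self]
      have h3 : A' x = 0 := Subtype.ext (by rw [hA'coe, h2]; rfl)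
      show T (A' x) = 0
      rw [h3]
      exact T.map_zero
  · -- norm bound
    have hA'norm : ‖A'‖ ≤ β := by
      apply ContinuousLinearMap.opNorm_le_bound _ hβ0
      intro y
      have h1 : ‖A' y‖ = ‖P (J y)‖ := by rw [← hA'coe]; rfl
      rw [h1]
      calc ‖P (J y)‖ ≤ ‖P‖ * ‖J y‖ := P.le_opNorm _
        _ ≤ β * ‖y‖ := by
            have hb : ‖J y‖ ≤ ‖y‖ := NormedSpace.double_dual_bound ℝ Y y
            apply mul_le_mul hQnorm hb (norm_nonneg _) hβ0
    calc ‖R‖ ≤ ‖T‖ * ‖A'‖ := ContinuousLinearMap.opNorm_comp_le _ _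
      _ ≤ (1 + ε / (β + 1)) * β := by
          apply mul_le_mul hTnorm.le hA'norm (ContinuousLinearMap.opNorm_nonneg A') (by positivity)
      _ ≤ β + ε := by
          have h : ε / (β + 1) * (β + 1) = ε := div_mul_cancel₀ _ (by linarith)
          nlinarith [hε'.le]
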